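/- If a generalized permutation π is irreducible, then every collection of positive reals (λ_α)_{α∈𝒜} with Σ_{i=1}^{l} λ_{π(i)} = Σ_{j=1}^{m} λ_{π(l+j)} is admissible for π. -/

import Mathlib

open Finset

/-- A generalized permutation of type `(l, m)`: a map from positions `1, …, l + m`
(the top line being positions `1, …, l` and the bottom line positions `l+1, …, l+m`)
to an alphabet `A`, such that every letter has exactly two preimages. -/
structure GenPerm (A : Type*) [DecidableEq A] where
  l : ℕ
  m : ℕ
  p : ℕ → A
  double : ∀ a : A, ((Finset.Icc 1 (l + m)).filter (fun i => p i = a)).card = 2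

namespace GenPerm

variable {A : Type*} [DecidableEq A]

/-- Total number of positions, `l + m = 2d`. -/
def size (π : GenPerm A) : ℕ := π.l + π.m

/-- The multiset of letters occupying positions `a, a+1, …, b`. -/
def seg (π : GenPerm A) (a b : ℕ) : Multiset A :=
  (Finset.Icc a b).val.map π.p

/-- `i` and `j` are the two positions of a common letter (i.e. `j = σ(i)` where `σ` is the
fixed-point-free involution associated to `π`). -/
def IsTwin (π : GenPerm A) (i j : ℕ) : Prop :=
  1 ≤ i ∧ i ≤ π.size ∧ 1 ≤ j ∧ j ≤ π.size ∧ i ≠ j ∧ π.p i = π.p j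

/-- The convention: some letter has both occurrences on the top line, and some letter has
both occurrences on the bottom line. -/
def Convention (π : GenPerm A) : Prop :=
  (∃ i j, π.IsTwin i j ∧ i ≤ π.l ∧ j ≤ π.l) ∧
  (∃ i j, π.IsTwin i j ∧ π.l < i ∧ π.l < j)

/-- `π` is reducible: it admits a decomposition with corners `A∪B`, `D∪B`, `A∪C`, `D∪C`
(for disjoint, not all empty, subsets `A,B,C,D` of the alphabet) such that (i) no corner is
empty, or (ii) exactly one corner is empty and it is a left one, or (iii) exactly two corners
are empty and they are both left or both right. -/
def Reducible (π : GenPerm A) : Prop :=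
  ∃ (As Bs Cs Ds : Finset A) (i1 i2 i3 i4 : ℕ),
    Disjoint As Bs ∧ Disjoint As Cs ∧ Disjoint As Ds ∧
    Disjoint Bs Cs ∧ Disjoint Bs Ds ∧ Disjoint Cs Ds ∧
    ¬(As = ∅ ∧ Bs = ∅ ∧ Cs = ∅ ∧ Ds = ∅) ∧
    i1 ≤ i2 ∧ i2 ≤ π.l ∧ π.l ≤ i3 ∧ i3 ≤ i4 ∧ i4 ≤ π.size ∧
    π.seg 1 i1 = As.val + Bs.val ∧
    π.seg (i2 + 1) π.l = Ds.val + Bs.val ∧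
    π.seg (π.l + 1) i3 = As.val + Cs.val ∧
    π.seg (i4 + 1) π.size = Ds.val + Cs.val ∧
    ((π.seg 1 i1 ≠ 0 ∧ π.seg (i2 + 1) π.l ≠ 0 ∧ π.seg (π.l + 1) i3 ≠ 0 ∧
        π.seg (i4 + 1) π.size ≠ 0) ∨
     (π.seg 1 i1 = 0 ∧ π.seg (i2 + 1) π.l ≠ 0 ∧ π.seg (π.l + 1) i3 ≠ 0 ∧
        π.seg (i4 + 1) π.size ≠ 0) ∨
     (π.seg 1 i1 ≠ 0 ∧ π.seg (i2 + 1) π.l ≠ 0 ∧ π.seg (π.l + 1) i3 = 0 ∧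
        π.seg (i4 + 1) π.size ≠ 0) ∨
     (π.seg 1 i1 = 0 ∧ π.seg (i2 + 1) π.l ≠ 0 ∧ π.seg (π.l + 1) i3 = 0 ∧
        π.seg (i4 + 1) π.size ≠ 0) ∨
     (π.seg 1 i1 ≠ 0 ∧ π.seg (i2 + 1) π.l = 0 ∧ π.seg (π.l + 1) i3 ≠ 0 ∧
        π.seg (i4 + 1) π.size = 0))

/-- `π` is irreducible if it is not reducible. -/
def Irreducible (π : GenPerm A) : Prop := ¬ π.Reducible

/-- `π` is strongly irreducible if every decomposition with corners `A∪B`, `D∪B`, `A∪C`,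
`D∪C` (for disjoint subsets) has all four corners empty. -/
def StronglyIrreducible (π : GenPerm A) : Prop :=
  ∀ (As Bs Cs Ds : Finset A) (i1 i2 i3 i4 : ℕ),
    Disjoint As Bs → Disjoint As Cs → Disjoint As Ds →
    Disjoint Bs Cs → Disjoint Bs Ds → Disjoint Cs Ds →
    i1 ≤ i2 → i2 ≤ π.l → π.l ≤ i3 → i3 ≤ i4 → i4 ≤ π.size →
    π.seg 1 i1 = As.val + Bs.val →
    π.seg (i2 + 1) π.l = Ds.val + Bs.val →
    π.seg (π.l + 1) i3 = As.val + Cs.val →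
    π.seg (i4 + 1) π.size = Ds.val + Cs.val →
    (π.seg 1 i1 = 0 ∧ π.seg (i2 + 1) π.l = 0 ∧ π.seg (π.l + 1) i3 = 0 ∧
      π.seg (i4 + 1) π.size = 0)

/-- `Σ_{j=1}^{k} ζ_{π(j)}` (partial sum along the top line). -/
noncomputable def topSum (π : GenPerm A) (ζ : A → ℂ) (k : ℕ) : ℂ := ∑ j ∈ Finset.Icc 1 k, ζ (π.p j)

/-- `Σ_{j=1}^{k} ζ_{π(l+j)}` (partial sum along the bottom line). -/
noncomputable def botSum (π : GenPerm A) (ζ : A → ℂ) (k : ℕ) : ℂ := ∑ j ∈ Finset.Icc 1 k, ζ (π.p (π.l + j))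

/-- Real version of `topSum`. -/
noncomputable def topSumR (π : GenPerm A) (τ : A → ℝ) (k : ℕ) : ℝ := ∑ j ∈ Finset.Icc 1 k, τ (π.p j)

/-- Real version of `botSum`. -/
noncomputable def botSumR (π : GenPerm A) (τ : A → ℝ) (k : ℕ) : ℝ := ∑ j ∈ Finset.Icc 1 k, τ (π.p (π.l + j))

/-- `ζ` is a suspension data for `π`. -/
def IsSuspension (π : GenPerm A) (ζ : A → ℂ) : Prop :=
  (∀ a, 0 < (ζ a).re) ∧
  (∀ i, 1 ≤ i → i ≤ π.l - 1 → 0 < (π.topSum ζ i).im) ∧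
  (∀ i, 1 ≤ i → i ≤ π.m - 1 → (π.botSum ζ i).im < 0) ∧
  π.topSum ζ π.l = π.botSum ζ π.m

/-- `τ` is a pseudo-suspension for `π`. -/
def IsPseudoSusp (π : GenPerm A) (τ : A → ℝ) : Prop :=
  (∀ k, 1 ≤ k → k ≤ π.l → 0 ≤ π.topSumR τ k) ∧
  (∀ k, 1 ≤ k → k ≤ π.m → π.botSumR τ k ≤ 0) ∧
  π.topSumR τ π.l = 0 ∧ π.botSumR τ π.m = 0

/-- `τ` is a strict pseudo-suspension for `π`: all the inequalities are strict except the
extremal ones. -/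
def IsStrictPseudoSusp (π : GenPerm A) (τ : A → ℝ) : Prop :=
  π.IsPseudoSusp τ ∧
  (∀ k, 1 ≤ k → k ≤ π.l - 1 → 0 < π.topSumR τ k) ∧
  (∀ k, 1 ≤ k → k ≤ π.m - 1 → π.botSumR τ k < 0)

/-- Number of occurrences of the letter `a` on the top line; so `a ∈ 𝒜₀ ↔ topCount = 2`,
`a ∈ 𝒜₁ ↔ topCount = 0`, and `a ∈ 𝒜₀₁ ↔ topCount = 1`. -/
def topCount (π : GenPerm A) (a : A) : ℕ :=
  ((Finset.Icc 1 π.l).filter (fun i => π.p i = a)).card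

end GenPerm

set_option linter.unusedSectionVars false

namespace GenPerm
variable {A : Type*} [DecidableEq A]

lemma mem_seg (π : GenPerm A) {a : A} {x y : ℕ} :
    a ∈ π.seg x y ↔ ∃ i, x ≤ i ∧ i ≤ y ∧ π.p i = a := by
  simp [seg, Multiset.mem_map, Finset.mem_Icc, and_assoc]

lemma seg_singleton (π : GenPerm A) (x : ℕ) : π.seg x x = {π.p x} := by
  simp [seg, Finset.Icc_self]

lemma mem_seg_self (π : GenPerm A) {a : A} {x : ℕ} (h : π.p x = a) : a ∈ π.seg x x :=
  π.mem_seg.mpr ⟨x, le_rfl, le_rfl, h⟩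

lemma seg_empty (π : GenPerm A) {x y : ℕ} (h : y < x) : π.seg x y = 0 := by
  simp [seg, Finset.Icc_eq_empty_of_lt h]

lemma three_pos (π : GenPerm A) {a : A} {x1 x2 x3 : ℕ} (h1 : 1 ≤ x1) (h12 : x1 < x2)
    (h23 : x2 < x3) (h3 : x3 ≤ π.size) (e1 : π.p x1 = a) (e2 : π.p x2 = a)
    (e3 : π.p x3 = a) : False := by
  have hd := π.double a
  have h3' : x3 ≤ π.l + π.m := h3
  have hsub : ({x1, x2, x3} : Finset ℕ) ⊆
      (Finset.Icc 1 (π.l + π.m)).filter (fun i => π.p i = a) := by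
    intro i hi
    simp only [Finset.mem_insert, Finset.mem_singleton] at hi
    rcases hi with rfl | rfl | rfl <;>
      simp only [Finset.mem_filter, Finset.mem_Icc] <;>
      refine ⟨⟨by omega, by omega⟩, by assumption⟩
  have hc : ({x1, x2, x3} : Finset ℕ).card = 3 := by
    rw [Finset.card_insert_of_notMem (by simp; omega),
      Finset.card_insert_of_notMem (by simp; omega), Finset.card_singleton]
  have := Finset.card_le_card hsub
  omega

lemma no_common (π : GenPerm A) {a : A} {y1 z1 y2 z2 y3 z3 : ℕ}
    (m1 : a ∈ π.seg y1 z1) (m2 : a ∈ π.seg y2 z2) (m3 : a ∈ π.seg y3 z3)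
    (hy1 : 1 ≤ y1) (h12 : z1 < y2) (h23 : z2 < y3) (h3 : z3 ≤ π.size) : False := by
  obtain ⟨x1, hx1a, hx1b, hx1c⟩ := π.mem_seg.mp m1
  obtain ⟨x2, hx2a, hx2b, hx2c⟩ := π.mem_seg.mp m2
  obtain ⟨x3, hx3a, hx3b, hx3c⟩ := π.mem_seg.mp m3
  exact π.three_pos (a := a) (by omega) (by omega) (by omega) (by omega) hx1c hx2c hx3c

lemma count_seg (π : GenPerm A) (a : A) (x y : ℕ) :
    Multiset.count a (π.seg x y) = ((Finset.Icc x y).filter (fun i => π.p i = a)).card := by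
  rw [seg, Multiset.count_map,
    Multiset.filter_congr (fun i _ => (eq_comm : a = π.p i ↔ π.p i = a))]
  rfl

lemma topCount_le_two (π : GenPerm A) (a : A) : π.topCount a ≤ 2 := by
  have hd := π.double a
  have : π.topCount a ≤ ((Finset.Icc 1 (π.l + π.m)).filter (fun i => π.p i = a)).card :=
    Finset.card_le_card (Finset.filter_subset_filter _
      (Finset.Icc_subset_Icc_right (Nat.le_add_right _ _)))
  omega

lemma split_card (π : GenPerm A) (a : A) :
    π.topCount a + ((Finset.Icc (π.l + 1) (π.l + π.m)).filter (fun i => π.p i = a)).card = 2 := by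
  have hd := π.double a
  have hu : Finset.Icc 1 π.l ∪ Finset.Icc (π.l + 1) (π.l + π.m) = Finset.Icc 1 (π.l + π.m) := by
    ext i; simp only [Finset.mem_union, Finset.mem_Icc]; omega
  have hdisj : Disjoint ((Finset.Icc 1 π.l).filter (fun i => π.p i = a))
      ((Finset.Icc (π.l + 1) (π.l + π.m)).filter (fun i => π.p i = a)) := by
    rw [Finset.disjoint_left]
    intro i hi hj
    simp only [Finset.mem_filter, Finset.mem_Icc] at hi hj
    omega
  rw [topCount, ← Finset.card_union_of_disjoint hdisj, ← Finset.filter_union, hu, hd]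

lemma topCount_eq_two (π : GenPerm A) {a : A} {x1 x2 : ℕ} (h1 : 1 ≤ x1) (h12 : x1 < x2)
    (h2 : x2 ≤ π.l) (e1 : π.p x1 = a) (e2 : π.p x2 = a) : π.topCount a = 2 := by
  have hle := π.topCount_le_two a
  rw [topCount] at hle
  have hsub : ({x1, x2} : Finset ℕ) ⊆ (Finset.Icc 1 π.l).filter (fun i => π.p i = a) := by
    intro i hi
    simp only [Finset.mem_insert, Finset.mem_singleton] at hi
    rcases hi with rfl | rfl <;> simp only [Finset.mem_filter, Finset.mem_Icc] <;>
      refine ⟨⟨by omega, by omega⟩, by assumption⟩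
  have hc : ({x1, x2} : Finset ℕ).card = 2 := by
    rw [Finset.card_insert_of_notMem (by simp; omega), Finset.card_singleton]
  have := Finset.card_le_card hsub
  rw [topCount]; omega

lemma mem_ne_zero {a : A} {s : Multiset A} (h : a ∈ s) : s ≠ 0 := by
  rintro rfl; exact Multiset.notMem_zero a h

lemma disjoint_of_tc (π : GenPerm A) {s t : Finset A} {u v : ℕ}
    (hs : ∀ a ∈ s, π.topCount a = u) (ht : ∀ a ∈ t, π.topCount a = v) (huv : u ≠ v) :
    Disjoint s t := by
  rw [Finset.disjoint_left]
  intro a ha hat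
  exact huv ((hs a ha).symm.trans (ht a hat))

lemma seg_succ_right (π : GenPerm A) {x y : ℕ} (h : x ≤ y + 1) :
    π.seg x (y + 1) = π.p (y + 1) ::ₘ π.seg x y := by
  rw [seg, seg, show Finset.Icc x (y+1) = insert (y+1) (Finset.Icc x y) by
    ext i; simp only [Finset.mem_insert, Finset.mem_Icc]; omega]
  rw [Finset.insert_val_of_notMem (by simp [Finset.mem_Icc]), Multiset.map_cons]

lemma seg_succ_left (π : GenPerm A) {x y : ℕ} (h : x ≤ y) :
    π.seg x y = π.p x ::ₘ π.seg (x + 1) y := by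
  rw [seg, seg, show Finset.Icc x y = insert x (Finset.Icc (x+1) y) by
    ext i; simp only [Finset.mem_insert, Finset.mem_Icc]; omega]
  rw [Finset.insert_val_of_notMem (by simp [Finset.mem_Icc]), Multiset.map_cons]

lemma cons_add_comm (a : A) (X Y : Multiset A) : a ::ₘ (X + Y) = X + (a ::ₘ Y) := by
  rw [← Multiset.singleton_add, ← Multiset.singleton_add, add_left_comm]

lemma cons_add_comm' (a : A) (X Y : Multiset A) : a ::ₘ (Y + X) = X + (a ::ₘ Y) := by
  rw [add_comm Y X, cons_add_comm]

lemma top_sum_eq [Fintype A] (π : GenPerm A) (lam : A → ℝ) :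
    π.topSumR lam π.l = ∑ a, (π.topCount a : ℝ) * lam a := by
  rw [topSumR,
    ← Finset.sum_fiberwise_of_maps_to (fun i _ => Finset.mem_univ (π.p i)) (fun i => lam (π.p i))]
  refine Finset.sum_congr rfl fun a _ => ?_
  rw [topCount, Finset.sum_congr rfl (fun i hi => by rw [(Finset.mem_filter.mp hi).2]),
    Finset.sum_const, nsmul_eq_mul]

lemma bot_sum_eq [Fintype A] (π : GenPerm A) (lam : A → ℝ) :
    π.botSumR lam π.m = ∑ a, (2 - (π.topCount a : ℝ)) * lam a := by
  have h0 : π.botSumR lam π.m = ∑ i ∈ Finset.Icc (π.l + 1) (π.l + π.m), lam (π.p i) := by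
    rw [botSumR, show Finset.Icc (π.l+1) (π.l+π.m) = (Finset.Icc 1 π.m).image (fun x => π.l + x) by
      rw [Finset.image_add_left_Icc]]
    rw [Finset.sum_image (by intro x _ y _ hxy; simp only at hxy; omega)]
  rw [h0, ← Finset.sum_fiberwise_of_maps_to (fun i _ => Finset.mem_univ (π.p i)) (fun i => lam (π.p i))]
  refine Finset.sum_congr rfl fun a _ => ?_
  rw [Finset.sum_congr rfl (fun i hi => by rw [(Finset.mem_filter.mp hi).2]),
    Finset.sum_const, nsmul_eq_mul]
  have hs := π.split_card a
  have hle := π.topCount_le_two a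
  have h2 : ((Finset.Icc (π.l+1) (π.l+π.m)).filter (fun i => π.p i = a)).card = 2 - π.topCount a := by
    omega
  rw [h2, Nat.cast_sub hle]
  norm_num

lemma B0_iff_C0 [Fintype A] (π : GenPerm A) (lam : A → ℝ) (hpos : ∀ a, 0 < lam a)
    (hsum : π.topSumR lam π.l = π.botSumR lam π.m) :
    ((Finset.univ.filter (fun a => π.topCount a = 2)) = ∅ ↔
     (Finset.univ.filter (fun a => π.topCount a = 0)) = ∅) := by
  have h := hsum
  rw [π.top_sum_eq lam, π.bot_sum_eq lam] at h
  have key : ∑ a ∈ Finset.univ.filter (fun a => π.topCount a = 2), lam a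
      = ∑ a ∈ Finset.univ.filter (fun a => π.topCount a = 0), lam a := by
    have e3 : ∀ a : A, ((π.topCount a : ℝ)) * lam a - (2 - (π.topCount a : ℝ)) * lam a
        = 2 * ((if π.topCount a = 2 then lam a else 0) - (if π.topCount a = 0 then lam a else 0)) := by
      intro a
      have h2 := π.topCount_le_two a
      have h3 : π.topCount a = 0 ∨ π.topCount a = 1 ∨ π.topCount a = 2 := by omega
      rcases h3 with h' | h' | h' <;> rw [h'] <;> norm_num
    have h4 : (0:ℝ) = ∑ a, (((π.topCount a:ℝ)) * lam a - (2 - (π.topCount a:ℝ)) * lam a) := by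
      rw [Finset.sum_sub_distrib, h, sub_self]
    rw [Finset.sum_congr rfl (fun a _ => e3 a), ← Finset.mul_sum, Finset.sum_sub_distrib,
      ← Finset.sum_filter, ← Finset.sum_filter] at h4
    linarith
  constructor
  · intro hB
    rw [hB, Finset.sum_empty] at key
    by_contra hC
    have : 0 < ∑ a ∈ Finset.univ.filter (fun a => π.topCount a = 0), lam a :=
      Finset.sum_pos (fun a _ => hpos a) (Finset.nonempty_iff_ne_empty.mpr hC)
    linarith
  · intro hC
    rw [hC, Finset.sum_empty] at key
    by_contra hB
    have : 0 < ∑ a ∈ Finset.univ.filter (fun a => π.topCount a = 2), lam a :=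
      Finset.sum_pos (fun a _ => hpos a) (Finset.nonempty_iff_ne_empty.mpr hB)
    linarith

end GenPerm


/-- Case (1) of dynamical reducibility of the length data. -/
def DynCond1 {A : Type*} [Fintype A] [DecidableEq A] (π : GenPerm A) : Prop :=
  (∃ (As : Finset A) (i1 i3 : ℕ), As.Nonempty ∧ (∀ a ∈ As, π.topCount a = 1) ∧
     i1 ≤ π.l ∧ π.l ≤ i3 ∧ i3 ≤ π.size ∧
     π.seg 1 i1 = As.val ∧ π.seg (π.l + 1) i3 = As.val) ∨
  (∃ (Ds : Finset A) (i2 i4 : ℕ), Ds.Nonempty ∧ (∀ a ∈ Ds, π.topCount a = 1) ∧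
     i2 ≤ π.l ∧ π.l ≤ i4 ∧ i4 ≤ π.size ∧
     π.seg (i2 + 1) π.l = Ds.val ∧ π.seg (i4 + 1) π.size = Ds.val) ∨
  (∃ (As Ds : Finset A) (i1 i2 i3 i4 : ℕ),
     (∀ a ∈ As, π.topCount a = 1) ∧ (∀ a ∈ Ds, π.topCount a = 1) ∧
     i1 ≤ i2 ∧ i2 ≤ π.l ∧ π.l ≤ i3 ∧ i3 ≤ i4 ∧ i4 ≤ π.size ∧
     π.seg 1 i1 = As.val + (Finset.univ.filter (fun a => π.topCount a = 2)).val ∧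
     π.seg (i2 + 1) π.l = Ds.val + (Finset.univ.filter (fun a => π.topCount a = 2)).val ∧
     π.seg (π.l + 1) i3 = As.val + (Finset.univ.filter (fun a => π.topCount a = 0)).val ∧
     π.seg (i4 + 1) π.size = Ds.val + (Finset.univ.filter (fun a => π.topCount a = 0)).val)

/-- Case (2) of dynamical reducibility of the length data `lam` (the version where the
distinguished letter `α₀` sits on the bottom line). -/
def DynCond2raw {A : Type*} [DecidableEq A] (π : GenPerm A) (lam : A → ℝ) : Prop :=
  ∃ (As Bs Cs Ds : Finset A) (i1 i2 i3 i4 : ℕ) (a0 : A),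
    (∀ a ∈ As, π.topCount a = 1) ∧ (∀ a ∈ Ds, π.topCount a = 1) ∧
    Bs.Nonempty ∧ (∀ a ∈ Bs, π.topCount a = 2) ∧ (∀ a ∈ Cs, π.topCount a = 0) ∧
    i1 ≤ i2 ∧ i2 ≤ π.l ∧ π.l ≤ i3 ∧ i3 ≤ i4 ∧ i4 ≤ π.size ∧
    π.seg 1 i1 = As.val + Bs.val ∧
    π.seg (i2 + 1) π.l = Bs.val + Ds.val ∧
    π.seg (π.l + 1) i3 = As.val + Cs.val ∧
    π.seg (i4 + 1) π.size = Cs.val + Ds.val ∧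
    i3 + 1 < i4 ∧ π.p (i3 + 1) = a0 ∧ π.p i4 = a0 ∧
    (∑ a ∈ Cs, lam a) ≤ (∑ a ∈ Bs, lam a) ∧
    (∑ a ∈ Bs, lam a) ≤ lam a0 + ∑ a ∈ Cs, lam a

/-- Case (2) of dynamical reducibility of the length data `lam`, after exchanging the top
and the bottom lines of `π` (so the distinguished letter `α₀` sits on the top line). -/
def DynCond2swap {A : Type*} [DecidableEq A] (π : GenPerm A) (lam : A → ℝ) : Prop :=
  ∃ (As Bs Cs Ds : Finset A) (j1 j2 j3 j4 : ℕ) (a0 : A),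
    (∀ a ∈ As, π.topCount a = 1) ∧ (∀ a ∈ Ds, π.topCount a = 1) ∧
    Bs.Nonempty ∧ (∀ a ∈ Bs, π.topCount a = 0) ∧ (∀ a ∈ Cs, π.topCount a = 2) ∧
    j1 ≤ j2 ∧ j2 ≤ π.m ∧ j3 ≤ j4 ∧ j4 ≤ π.l ∧
    π.seg (π.l + 1) (π.l + j1) = As.val + Bs.val ∧
    π.seg (π.l + j2 + 1) π.size = Bs.val + Ds.val ∧
    π.seg 1 j3 = As.val + Cs.val ∧
    π.seg (j4 + 1) π.l = Cs.val + Ds.val ∧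
    j3 + 1 < j4 ∧ π.p (j3 + 1) = a0 ∧ π.p j4 = a0 ∧
    (∑ a ∈ Cs, lam a) ≤ (∑ a ∈ Bs, lam a) ∧
    (∑ a ∈ Bs, lam a) ≤ lam a0 + ∑ a ∈ Cs, lam a

/-- The length data `lam` is admissible for `π`. -/
def Admissible {A : Type*} [Fintype A] [DecidableEq A] (π : GenPerm A) (lam : A → ℝ) : Prop :=
  ¬(DynCond1 π ∨ DynCond2raw π lam ∨ DynCond2swap π lam)


lemma dyn1_red {A : Type*} [Fintype A] [DecidableEq A] (π : GenPerm A) (lam : A → ℝ)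
    (hpos : ∀ a, 0 < lam a) (hsum : π.topSumR lam π.l = π.botSumR lam π.m)
    (hd : DynCond1 π) : π.Reducible := by
  rcases hd with ⟨As, i1, i3, hAne, hAtc, h1l, hl3, h3s, hs1, hs3⟩ |
    ⟨Ds, i2, i4, hDne, hDtc, h2l, hl4, h4s, hs2, hs4⟩ |
    ⟨As, Ds, i1, i2, i3, i4, hAtc, hDtc, h12, h2l, hl3, h34, h4s, hs1, hs2, hs3, hs4⟩
  · obtain ⟨a, ha⟩ := hAne
    refine ⟨As, ∅, ∅, ∅, i1, π.l, i3, π.size, Finset.disjoint_empty_right _,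
      Finset.disjoint_empty_right _, Finset.disjoint_empty_right _,
      Finset.disjoint_empty_right _, Finset.disjoint_empty_right _,
      Finset.disjoint_empty_right _, ?_, h1l, le_rfl, hl3, h3s, le_rfl, ?_, ?_, ?_, ?_, ?_⟩
    · intro hall
      exact Finset.notMem_empty a (hall.1 ▸ ha)
    · simpa using hs1
    · simp [π.seg_empty (Nat.lt_succ_self _)]
    · simpa using hs3
    · simp [π.seg_empty (Nat.lt_succ_self _)]
    · refine Or.inr (Or.inr (Or.inr (Or.inr ⟨?_, ?_, ?_, ?_⟩)))
      · rw [hs1]; exact GenPerm.mem_ne_zero (Finset.mem_val.mpr ha)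
      · exact π.seg_empty (Nat.lt_succ_self _)
      · rw [hs3]; exact GenPerm.mem_ne_zero (Finset.mem_val.mpr ha)
      · exact π.seg_empty (Nat.lt_succ_self _)
  · obtain ⟨a, ha⟩ := hDne
    refine ⟨∅, ∅, ∅, Ds, 0, i2, π.l, i4, Finset.disjoint_empty_right _,
      Finset.disjoint_empty_right _, Finset.disjoint_empty_left _,
      Finset.disjoint_empty_right _, Finset.disjoint_empty_left _,
      Finset.disjoint_empty_left _, ?_, Nat.zero_le _, h2l, le_rfl, hl4, h4s,
      ?_, ?_, ?_, ?_, ?_⟩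
    · intro hall
      exact Finset.notMem_empty a (hall.2.2.2 ▸ ha)
    · simp [π.seg_empty Nat.zero_lt_one]
    · simpa using hs2
    · simp [π.seg_empty (Nat.lt_succ_self _)]
    · simpa using hs4
    · refine Or.inr (Or.inr (Or.inr (Or.inl ⟨?_, ?_, ?_, ?_⟩)))
      · exact π.seg_empty Nat.zero_lt_one
      · rw [hs2]; exact GenPerm.mem_ne_zero (Finset.mem_val.mpr ha)
      · exact π.seg_empty (Nat.lt_succ_self _)
      · rw [hs4]; exact GenPerm.mem_ne_zero (Finset.mem_val.mpr ha)
  · set B0 : Finset A := Finset.univ.filter (fun a => π.topCount a = 2) with hB0def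
    set C0 : Finset A := Finset.univ.filter (fun a => π.topCount a = 0) with hC0def
    have hB0tc : ∀ a ∈ B0, π.topCount a = 2 := fun a ha => (Finset.mem_filter.mp ha).2
    have hC0tc : ∀ a ∈ C0, π.topCount a = 0 := fun a ha => (Finset.mem_filter.mp ha).2
    have hAD : Disjoint As Ds := by
      rw [Finset.disjoint_left]
      intro a haA haD
      exact π.no_common
        (by rw [hs1]; exact Multiset.mem_add.mpr (Or.inl (Finset.mem_val.mpr haA)))
        (by rw [hs2]; exact Multiset.mem_add.mpr (Or.inl (Finset.mem_val.mpr haD)))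
        (by rw [hs3]; exact Multiset.mem_add.mpr (Or.inl (Finset.mem_val.mpr haA)))
        le_rfl (by omega) (by omega) (by omega)
    by_cases hB : B0 = ∅
    · have hC : C0 = ∅ := (π.B0_iff_C0 lam hpos hsum).mp hB
      have hB0v : B0.val = 0 := by rw [hB]; rfl
      have hC0v : C0.val = 0 := by rw [hC]; rfl
      by_cases hA : As = ∅
      · by_cases hD : Ds = ∅
        · -- everything empty: use the whole alphabet
          have hna : Nonempty A := ⟨π.p 0⟩
          have htc1 : ∀ a : A, π.topCount a = 1 := by
            intro a
            have h2 := π.topCount_le_two a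
            have hn2 : π.topCount a ≠ 2 := fun h' =>
              Finset.notMem_empty a (hB ▸ Finset.mem_filter.mpr ⟨Finset.mem_univ a, h'⟩)
            have hn0 : π.topCount a ≠ 0 := fun h' =>
              Finset.notMem_empty a (hC ▸ Finset.mem_filter.mpr ⟨Finset.mem_univ a, h'⟩)
            omega
          have hseg1 : π.seg 1 π.l = (Finset.univ : Finset A).val := by
            refine Multiset.ext.mpr fun a => ?_
            rw [π.count_seg,
              Multiset.count_eq_one_of_mem Finset.univ.nodup (Finset.mem_val.mpr (Finset.mem_univ a))]
            exact htc1 a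
          have hseg3 : π.seg (π.l + 1) π.size = (Finset.univ : Finset A).val := by
            refine Multiset.ext.mpr fun a => ?_
            rw [π.count_seg,
              Multiset.count_eq_one_of_mem Finset.univ.nodup (Finset.mem_val.mpr (Finset.mem_univ a))]
            have hs := π.split_card a
            have ht := htc1 a
            have hsz : π.size = π.l + π.m := rfl
            rw [hsz]
            omega
          have huvne : (Finset.univ : Finset A).val ≠ 0 := by
            intro h0
            rw [Finset.val_eq_zero] at h0
            exact (Finset.univ_eq_empty_iff.mp h0).false (π.p 0)
          refine ⟨Finset.univ, ∅, ∅, ∅, π.l, π.l, π.size, π.size,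
            Finset.disjoint_empty_right _, Finset.disjoint_empty_right _,
            Finset.disjoint_empty_right _, Finset.disjoint_empty_right _,
            Finset.disjoint_empty_right _, Finset.disjoint_empty_right _, ?_,
            le_rfl, le_rfl, Nat.le_add_right _ _, le_rfl, le_rfl, ?_, ?_, ?_, ?_, ?_⟩
          · intro hall
            exact (Finset.univ_eq_empty_iff.mp hall.1).false (π.p 0)
          · simpa using hseg1
          · simp [π.seg_empty (Nat.lt_succ_self _)]
          · simpa using hseg3
          · simp [π.seg_empty (Nat.lt_succ_self _)]
          · refine Or.inr (Or.inr (Or.inr (Or.inr ⟨?_, ?_, ?_, ?_⟩)))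
            · rw [hseg1]; exact huvne
            · exact π.seg_empty (Nat.lt_succ_self _)
            · rw [hseg3]; exact huvne
            · exact π.seg_empty (Nat.lt_succ_self _)
        · -- As = ∅, Ds ≠ ∅ : pattern (iv)
          obtain ⟨d, hdD⟩ := Finset.nonempty_iff_ne_empty.mpr hD
          refine ⟨As, B0, C0, Ds, i1, i2, i3, i4,
            π.disjoint_of_tc hAtc hB0tc (by omega), π.disjoint_of_tc hAtc hC0tc (by omega),
            hAD, π.disjoint_of_tc hB0tc hC0tc (by omega), π.disjoint_of_tc hB0tc hDtc (by omega),
            π.disjoint_of_tc hC0tc hDtc (by omega), ?_, h12, h2l, hl3, h34, h4s,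
            hs1, hs2, hs3, hs4, ?_⟩
          · intro hall
            exact Finset.notMem_empty d (hall.2.2.2 ▸ hdD)
          · refine Or.inr (Or.inr (Or.inr (Or.inl ⟨?_, ?_, ?_, ?_⟩)))
            · rw [hs1, hA, hB0v]; rfl
            · rw [hs2]; exact GenPerm.mem_ne_zero
                (Multiset.mem_add.mpr (Or.inl (Finset.mem_val.mpr hdD)))
            · rw [hs3, hA, hC0v]; rfl
            · rw [hs4]; exact GenPerm.mem_ne_zero
                (Multiset.mem_add.mpr (Or.inl (Finset.mem_val.mpr hdD)))
      · obtain ⟨a, haA⟩ := Finset.nonempty_iff_ne_empty.mpr hA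
        by_cases hD : Ds = ∅
        · -- As ≠ ∅, Ds = ∅ : pattern (v)
          refine ⟨As, B0, C0, Ds, i1, i2, i3, i4,
            π.disjoint_of_tc hAtc hB0tc (by omega), π.disjoint_of_tc hAtc hC0tc (by omega),
            hAD, π.disjoint_of_tc hB0tc hC0tc (by omega), π.disjoint_of_tc hB0tc hDtc (by omega),
            π.disjoint_of_tc hC0tc hDtc (by omega), ?_, h12, h2l, hl3, h34, h4s,
            hs1, hs2, hs3, hs4, ?_⟩
          · intro hall
            exact Finset.notMem_empty a (hall.1 ▸ haA)
          · refine Or.inr (Or.inr (Or.inr (Or.inr ⟨?_, ?_, ?_, ?_⟩)))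
            · rw [hs1]; exact GenPerm.mem_ne_zero
                (Multiset.mem_add.mpr (Or.inl (Finset.mem_val.mpr haA)))
            · rw [hs2, hD, hB0v]; rfl
            · rw [hs3]; exact GenPerm.mem_ne_zero
                (Multiset.mem_add.mpr (Or.inl (Finset.mem_val.mpr haA)))
            · rw [hs4, hD, hC0v]; rfl
        · -- As ≠ ∅, Ds ≠ ∅ : pattern (i)
          obtain ⟨d, hdD⟩ := Finset.nonempty_iff_ne_empty.mpr hD
          refine ⟨As, B0, C0, Ds, i1, i2, i3, i4,
            π.disjoint_of_tc hAtc hB0tc (by omega), π.disjoint_of_tc hAtc hC0tc (by omega),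
            hAD, π.disjoint_of_tc hB0tc hC0tc (by omega), π.disjoint_of_tc hB0tc hDtc (by omega),
            π.disjoint_of_tc hC0tc hDtc (by omega), ?_, h12, h2l, hl3, h34, h4s,
            hs1, hs2, hs3, hs4, ?_⟩
          · intro hall
            exact Finset.notMem_empty a (hall.1 ▸ haA)
          · refine Or.inl ⟨?_, ?_, ?_, ?_⟩
            · rw [hs1]; exact GenPerm.mem_ne_zero
                (Multiset.mem_add.mpr (Or.inl (Finset.mem_val.mpr haA)))
            · rw [hs2]; exact GenPerm.mem_ne_zero
                (Multiset.mem_add.mpr (Or.inl (Finset.mem_val.mpr hdD)))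
            · rw [hs3]; exact GenPerm.mem_ne_zero
                (Multiset.mem_add.mpr (Or.inl (Finset.mem_val.mpr haA)))
            · rw [hs4]; exact GenPerm.mem_ne_zero
                (Multiset.mem_add.mpr (Or.inl (Finset.mem_val.mpr hdD)))
    · -- B0 ≠ ∅, hence C0 ≠ ∅ : pattern (i)
      have hC : C0 ≠ ∅ := fun h' => hB ((π.B0_iff_C0 lam hpos hsum).mpr h')
      obtain ⟨b, hbB⟩ := Finset.nonempty_iff_ne_empty.mpr hB
      obtain ⟨c, hcC⟩ := Finset.nonempty_iff_ne_empty.mpr hC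
      refine ⟨As, B0, C0, Ds, i1, i2, i3, i4,
        π.disjoint_of_tc hAtc hB0tc (by omega), π.disjoint_of_tc hAtc hC0tc (by omega),
        hAD, π.disjoint_of_tc hB0tc hC0tc (by omega), π.disjoint_of_tc hB0tc hDtc (by omega),
        π.disjoint_of_tc hC0tc hDtc (by omega), ?_, h12, h2l, hl3, h34, h4s,
        hs1, hs2, hs3, hs4, ?_⟩
      · intro hall
        exact Finset.notMem_empty b (hall.2.1 ▸ hbB)
      · refine Or.inl ⟨?_, ?_, ?_, ?_⟩
        · rw [hs1]; exact GenPerm.mem_ne_zero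
            (Multiset.mem_add.mpr (Or.inr (Finset.mem_val.mpr hbB)))
        · rw [hs2]; exact GenPerm.mem_ne_zero
            (Multiset.mem_add.mpr (Or.inr (Finset.mem_val.mpr hbB)))
        · rw [hs3]; exact GenPerm.mem_ne_zero
            (Multiset.mem_add.mpr (Or.inr (Finset.mem_val.mpr hcC)))
        · rw [hs4]; exact GenPerm.mem_ne_zero
            (Multiset.mem_add.mpr (Or.inr (Finset.mem_val.mpr hcC)))

lemma dyn2raw_red {A : Type*} [DecidableEq A] (π : GenPerm A) (lam : A → ℝ)
    (hd : DynCond2raw π lam) : π.Reducible := by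
  obtain ⟨As, Bs, Cs, Ds, i1, i2, i3, i4, a0, hAtc, hDtc, hBne, hBtc, hCtc, h12, h2l, hl3,
    h34, h4s, hs1, hs2, hs3, hs4, h3lt4, hp3, hp4, -, -⟩ := hd
  obtain ⟨b, hbB⟩ := hBne
  have htc0 : π.topCount a0 = 0 := by
    rw [GenPerm.topCount, Finset.card_eq_zero, Finset.filter_eq_empty_iff]
    intro x hx hpx
    rw [Finset.mem_Icc] at hx
    exact π.three_pos (x1 := x) (by omega) (by omega) h3lt4 (by omega) hpx hp3 hp4
  have ha0C : a0 ∉ Cs := by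
    intro hC
    obtain ⟨x, hx1, hx2, hx3⟩ := π.mem_seg.mp (show a0 ∈ π.seg (π.l+1) i3 by
      rw [hs3]; exact Multiset.mem_add.mpr (Or.inr (Finset.mem_val.mpr hC)))
    exact π.three_pos (x1 := x) (by omega) (by omega) h3lt4 (by omega) hx3 hp3 hp4
  have hAD : Disjoint As Ds := by
    rw [Finset.disjoint_left]
    intro a haA haD
    exact π.no_common
      (by rw [hs1]; exact Multiset.mem_add.mpr (Or.inl (Finset.mem_val.mpr haA)))
      (by rw [hs2]; exact Multiset.mem_add.mpr (Or.inr (Finset.mem_val.mpr haD)))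
      (by rw [hs3]; exact Multiset.mem_add.mpr (Or.inl (Finset.mem_val.mpr haA)))
      le_rfl (by omega) (by omega) (by omega)
  have hCval : (insert a0 Cs).val = a0 ::ₘ Cs.val := Finset.insert_val_of_notMem ha0C
  have hC'tc : ∀ a ∈ insert a0 Cs, π.topCount a = 0 := by
    intro a ha
    rcases Finset.mem_insert.mp ha with rfl | ha'
    · exact htc0
    · exact hCtc a ha'
  have e3 : π.seg (π.l + 1) (i3 + 1) = As.val + (insert a0 Cs).val := by
    rw [π.seg_succ_right (by omega), hs3, hp3, hCval, GenPerm.cons_add_comm]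
  have e4 : π.seg (i4 - 1 + 1) π.size = Ds.val + (insert a0 Cs).val := by
    rw [show i4 - 1 + 1 = i4 by omega, π.seg_succ_left h4s, hs4, hp4, hCval,
      GenPerm.cons_add_comm']
  refine ⟨As, Bs, insert a0 Cs, Ds, i1, i2, i3 + 1, i4 - 1,
    π.disjoint_of_tc hAtc hBtc (by omega), π.disjoint_of_tc hAtc hC'tc (by omega), hAD,
    π.disjoint_of_tc hBtc hC'tc (by omega), π.disjoint_of_tc hBtc hDtc (by omega),
    π.disjoint_of_tc hC'tc hDtc (by omega), ?_, h12, h2l, by omega, by omega, by omega,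
    hs1, by rw [hs2]; exact add_comm _ _, e3, e4, ?_⟩
  · intro hall
    exact Finset.notMem_empty b (hall.2.1 ▸ hbB)
  · refine Or.inl ⟨?_, ?_, ?_, ?_⟩
    · rw [hs1]; exact GenPerm.mem_ne_zero
        (Multiset.mem_add.mpr (Or.inr (Finset.mem_val.mpr hbB)))
    · rw [hs2]; exact GenPerm.mem_ne_zero
        (Multiset.mem_add.mpr (Or.inl (Finset.mem_val.mpr hbB)))
    · rw [e3]; exact GenPerm.mem_ne_zero
        (Multiset.mem_add.mpr (Or.inr (Finset.mem_val.mpr (Finset.mem_insert_self a0 Cs))))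
    · rw [e4]; exact GenPerm.mem_ne_zero
        (Multiset.mem_add.mpr (Or.inr (Finset.mem_val.mpr (Finset.mem_insert_self a0 Cs))))

lemma dyn2swap_red {A : Type*} [DecidableEq A] (π : GenPerm A) (lam : A → ℝ)
    (hd : DynCond2swap π lam) : π.Reducible := by
  obtain ⟨As, Bs, Cs, Ds, j1, j2, j3, j4, a0, hAtc, hDtc, hBne, hBtc, hCtc, h12, h2m, h34,
    h4l, hs1, hs2, hs3, hs4, h3lt4, hp3, hp4, -, -⟩ := hd
  obtain ⟨b, hbB⟩ := hBne
  have hszeq : π.size = π.l + π.m := rfl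
  have htc2 : π.topCount a0 = 2 :=
    π.topCount_eq_two (x1 := j3 + 1) (x2 := j4) (by omega) (by omega) h4l hp3 hp4
  have ha0C : a0 ∉ Cs := by
    intro hC
    obtain ⟨x, hx1, hx2, hx3⟩ := π.mem_seg.mp (show a0 ∈ π.seg 1 j3 by
      rw [hs3]; exact Multiset.mem_add.mpr (Or.inr (Finset.mem_val.mpr hC)))
    exact π.three_pos (x1 := x) (by omega) (by omega) h3lt4 (by omega) hx3 hp3 hp4
  have hAD : Disjoint As Ds := by
    rw [Finset.disjoint_left]
    intro a haA haD
    exact π.no_common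
      (by rw [hs3]; exact Multiset.mem_add.mpr (Or.inl (Finset.mem_val.mpr haA)))
      (by rw [hs4]; exact Multiset.mem_add.mpr (Or.inr (Finset.mem_val.mpr haD)))
      (by rw [hs1]; exact Multiset.mem_add.mpr (Or.inl (Finset.mem_val.mpr haA)))
      le_rfl (by omega) (by omega) (by omega)
  have hCval : (insert a0 Cs).val = a0 ::ₘ Cs.val := Finset.insert_val_of_notMem ha0C
  have hC'tc : ∀ a ∈ insert a0 Cs, π.topCount a = 2 := by
    intro a ha
    rcases Finset.mem_insert.mp ha with rfl | ha'
    · exact htc2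
    · exact hCtc a ha'
  have e1 : π.seg 1 (j3 + 1) = As.val + (insert a0 Cs).val := by
    rw [π.seg_succ_right (by omega), hs3, hp3, hCval, GenPerm.cons_add_comm]
  have e2 : π.seg (j4 - 1 + 1) π.l = Ds.val + (insert a0 Cs).val := by
    rw [show j4 - 1 + 1 = j4 by omega, π.seg_succ_left h4l, hs4, hp4, hCval,
      GenPerm.cons_add_comm']
  refine ⟨As, insert a0 Cs, Bs, Ds, j3 + 1, j4 - 1, π.l + j1, π.l + j2,
    π.disjoint_of_tc hAtc hC'tc (by omega), π.disjoint_of_tc hAtc hBtc (by omega), hAD,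
    π.disjoint_of_tc hC'tc hBtc (by omega), π.disjoint_of_tc hC'tc hDtc (by omega),
    π.disjoint_of_tc hBtc hDtc (by omega), ?_, by omega, by omega, Nat.le_add_right _ _,
    by omega, by omega, e1, e2, hs1, by rw [hs2]; exact add_comm _ _, ?_⟩
  · intro hall
    exact Finset.notMem_empty b (hall.2.2.1 ▸ hbB)
  · refine Or.inl ⟨?_, ?_, ?_, ?_⟩
    · rw [e1]; exact GenPerm.mem_ne_zero
        (Multiset.mem_add.mpr (Or.inr (Finset.mem_val.mpr (Finset.mem_insert_self a0 Cs))))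
    · rw [e2]; exact GenPerm.mem_ne_zero
        (Multiset.mem_add.mpr (Or.inr (Finset.mem_val.mpr (Finset.mem_insert_self a0 Cs))))
    · rw [hs1]; exact GenPerm.mem_ne_zero
        (Multiset.mem_add.mpr (Or.inr (Finset.mem_val.mpr hbB)))
    · rw [hs2]; exact GenPerm.mem_ne_zero
        (Multiset.mem_add.mpr (Or.inl (Finset.mem_val.mpr hbB)))

/-- If `π` is irreducible then every positive length data with equal top
and bottom sums is admissible for `π`. -/
theorem irreducible_admissible {A : Type*} [Fintype A] [DecidableEq A] (π : GenPerm A)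
    (h : π.Irreducible) (lam : A → ℝ) (hpos : ∀ a, 0 < lam a)
    (hsum : π.topSumR lam π.l = π.botSumR lam π.m) :
    Admissible π lam := by
  rintro (h1 | h2 | h3)
  · exact h (dyn1_red π lam hpos hsum h1)
  · exact h (dyn2raw_red π lam h2)
  · exact h (dyn2swap_red π lam h3)
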